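/- Let d₁,…,dₙ ∈ ℕ with m = Σᵢ dᵢ, and x₁,…,xₙ ∈ ℕ with 0 ≤ xᵢ ≤ dᵢ, Σᵢ xᵢ = k, and m > k. Then |H(d₁−x₁,…,dₙ−xₙ) − H(d₁,…,dₙ) − Σᵢ xᵢ·log₂(dᵢ/m)| ≤ 2k/ln 2, where H(z₁,…,zₙ) = −Σᵢ zᵢ·log₂(zᵢ/S) with S the sum of the zᵢ. -/

import Mathlib

theorem entropy_change_linear_apx (n k m : ℕ) (d x : Fin n → ℕ)
    (hm : m = ∑ i, d i) (hk : ∑ i, x i = k)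
    (hxd : ∀ i, x i ≤ d i) (hkm : k < m) :
    |(-∑ i, ((d i : ℝ) - x i) * Real.logb 2 (((d i : ℝ) - x i) / ((m : ℝ) - k)))
      - (-∑ i, (d i : ℝ) * Real.logb 2 ((d i : ℝ) / m))
      - ∑ i, (x i : ℝ) * Real.logb 2 ((d i : ℝ) / m)|
    ≤ 2 * k / Real.log 2 := by
  have h2 : (0:ℝ) < Real.log 2 := Real.log_pos (by norm_num)
  have hkm' : (k:ℝ) < (m:ℝ) := by exact_mod_cast hkm
  have hMK : (0:ℝ) < (m:ℝ) - k := by linarith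
  have hM : (0:ℝ) < (m:ℝ) := lt_of_le_of_lt (Nat.cast_nonneg k) hkm'
  have hsum : (m:ℝ) - (k:ℝ) = ∑ i, ((d i:ℝ) - (x i:ℝ)) := by
    rw [Finset.sum_sub_distrib, hm, ← hk]; push_cast; ring
  -- termwise identity
  have term : ∀ i, (d i:ℝ) * Real.logb 2 ((d i:ℝ)/m) - (x i:ℝ) * Real.logb 2 ((d i:ℝ)/m)
      - ((d i:ℝ) - x i) * Real.logb 2 (((d i:ℝ) - x i)/((m:ℝ)-k))
      = ((d i:ℝ) - x i) * Real.logb 2 ((d i:ℝ)/((d i:ℝ) - x i))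
        + ((d i:ℝ) - x i) * Real.logb 2 (((m:ℝ)-k)/m) := by
    intro i
    rcases eq_or_lt_of_le (hxd i) with h | h
    · rw [h]; ring
    · have hb : (0:ℝ) < (d i:ℝ) - x i := by
        have : (x i:ℝ) < (d i:ℝ) := by exact_mod_cast h
        linarith
      have ha : (0:ℝ) < (d i:ℝ) := by
        have : (0:ℝ) ≤ (x i:ℝ) := Nat.cast_nonneg _
        linarith
      rw [Real.logb_div ha.ne' hM.ne', Real.logb_div hb.ne' hMK.ne',
        Real.logb_div ha.ne' hb.ne', Real.logb_div hMK.ne' hM.ne']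
      ring
  have key : (-∑ i, ((d i : ℝ) - x i) * Real.logb 2 (((d i : ℝ) - x i) / ((m : ℝ) - k)))
      - (-∑ i, (d i : ℝ) * Real.logb 2 ((d i : ℝ) / m))
      - ∑ i, (x i : ℝ) * Real.logb 2 ((d i : ℝ) / m)
      = (∑ i, ((d i:ℝ) - x i) * Real.logb 2 ((d i:ℝ)/((d i:ℝ) - x i)))
        + ((m:ℝ) - k) * Real.logb 2 (((m:ℝ)-k)/m) := by
    have hB : ((m:ℝ) - k) * Real.logb 2 (((m:ℝ)-k)/m)
        = ∑ i, ((d i:ℝ) - x i) * Real.logb 2 (((m:ℝ)-k)/m) := by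
      rw [← Finset.sum_mul, ← hsum]
    rw [hB, ← Finset.sum_add_distrib]
    rw [show (-∑ i, ((d i : ℝ) - x i) * Real.logb 2 (((d i : ℝ) - x i) / ((m : ℝ) - k)))
        - (-∑ i, (d i : ℝ) * Real.logb 2 ((d i : ℝ) / m))
        - ∑ i, (x i : ℝ) * Real.logb 2 ((d i : ℝ) / m)
        = ∑ i, ((d i:ℝ) * Real.logb 2 ((d i:ℝ)/m) - (x i:ℝ) * Real.logb 2 ((d i:ℝ)/m)
          - ((d i:ℝ) - x i) * Real.logb 2 (((d i:ℝ) - x i)/((m:ℝ)-k))) from by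
      rw [Finset.sum_sub_distrib, Finset.sum_sub_distrib]; ring]
    exact Finset.sum_congr rfl fun i _ => term i
  -- bounds on A terms
  have hA0 : ∀ i, 0 ≤ ((d i:ℝ) - x i) * Real.logb 2 ((d i:ℝ)/((d i:ℝ) - x i)) := by
    intro i
    rcases eq_or_lt_of_le (hxd i) with h | h
    · rw [h, sub_self, zero_mul]
    · have hb : (0:ℝ) < (d i:ℝ) - x i := by
        have : (x i:ℝ) < (d i:ℝ) := by exact_mod_cast h
        linarith
      have hr : (1:ℝ) ≤ (d i:ℝ)/((d i:ℝ) - x i) := by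
        rw [le_div_iff₀ hb]
        have : (0:ℝ) ≤ (x i:ℝ) := Nat.cast_nonneg _
        linarith
      exact mul_nonneg hb.le (Real.logb_nonneg (by norm_num) hr)
  have hA1 : ∀ i, ((d i:ℝ) - x i) * Real.logb 2 ((d i:ℝ)/((d i:ℝ) - x i))
      ≤ (x i:ℝ) / Real.log 2 := by
    intro i
    rcases eq_or_lt_of_le (hxd i) with h | h
    · rw [h, sub_self, zero_mul]
      positivity
    · have hb : (0:ℝ) < (d i:ℝ) - x i := by
        have : (x i:ℝ) < (d i:ℝ) := by exact_mod_cast h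
        linarith
      have ha : (0:ℝ) < (d i:ℝ) := by
        have : (0:ℝ) ≤ (x i:ℝ) := Nat.cast_nonneg _
        linarith
      have hlog := Real.log_le_sub_one_of_pos (div_pos ha hb)
      have hmain : ((d i:ℝ) - x i) * Real.log ((d i:ℝ)/((d i:ℝ) - x i)) ≤ (x i:ℝ) := by
        have h1 : ((d i:ℝ) - x i) * ((d i:ℝ)/((d i:ℝ) - x i) - 1) = (x i:ℝ) := by
          field_simp
          ring
        nlinarith
      rw [Real.logb, ← mul_div_assoc]
      exact div_le_div_of_nonneg_right hmain h2.le
  -- bounds on B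
  have hB0 : ((m:ℝ) - k) * Real.logb 2 (((m:ℝ)-k)/m) ≤ 0 := by
    apply mul_nonpos_of_nonneg_of_nonpos hMK.le
    apply Real.logb_nonpos (by norm_num) (by positivity)
    rw [div_le_one hM]
    have : (0:ℝ) ≤ (k:ℝ) := Nat.cast_nonneg _
    linarith
  have hB1 : -((k:ℝ) / Real.log 2) ≤ ((m:ℝ) - k) * Real.logb 2 (((m:ℝ)-k)/m) := by
    have hlog := Real.log_le_sub_one_of_pos (div_pos hM hMK)
    have h1 : ((m:ℝ) - k) * ((m:ℝ)/((m:ℝ)-k) - 1) = (k:ℝ) := by field_simp; ring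
    have hinv : Real.log (((m:ℝ)-k)/m) = - Real.log ((m:ℝ)/((m:ℝ)-k)) := by
      rw [← Real.log_inv, inv_div]
    have hmain : -(k:ℝ) ≤ ((m:ℝ) - k) * Real.log (((m:ℝ)-k)/m) := by
      rw [hinv]; nlinarith
    rw [Real.logb, ← mul_div_assoc, ← neg_div]
    exact div_le_div_of_nonneg_right hmain h2.le
  -- sum bounds
  have hAs0 : 0 ≤ ∑ i, ((d i:ℝ) - x i) * Real.logb 2 ((d i:ℝ)/((d i:ℝ) - x i)) :=
    Finset.sum_nonneg fun i _ => hA0 i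
  have hAs1 : (∑ i, ((d i:ℝ) - x i) * Real.logb 2 ((d i:ℝ)/((d i:ℝ) - x i)))
      ≤ (k:ℝ) / Real.log 2 := by
    calc (∑ i, ((d i:ℝ) - x i) * Real.logb 2 ((d i:ℝ)/((d i:ℝ) - x i)))
        ≤ ∑ i, (x i:ℝ) / Real.log 2 := Finset.sum_le_sum fun i _ => hA1 i
      _ = (k:ℝ) / Real.log 2 := by
          rw [← Finset.sum_div, ← hk]; push_cast; ring
  have hknn : (0:ℝ) ≤ (k:ℝ) / Real.log 2 := by positivity
  rw [key, abs_le]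
  have h2k : 2 * (k:ℝ) / Real.log 2 = 2 * ((k:ℝ) / Real.log 2) := by ring
  constructor
  · rw [h2k]; linarith
  · rw [h2k]; linarith
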